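/- Let 𝒜 = (S, Σ, A, 𝒯) be a strongly connected unrestricted Rabin automaton. Then the sofic tree shift Sh_𝒜 is irreducible. -/

import Mathlib

/-! Common definitions: configurations over the regular rooted tree `Σ*`
(words = `List Sg`), the shift action, tree shifts, blocks, shifts of finite
type, cellular automata, sofic tree shifts, unrestricted Rabin automata. -/

/-- The shift action: `f^w (w') = f (w ++ w')`. -/
def shiftMap {Sg A : Type} (f : List Sg → A) (w : List Sg) : List Sg → A :=
  fun w' => f (w ++ w')

/-- The orbit `{f^w : w ∈ Σ*}` of a configuration under the shift action. -/
def shiftOrbit {Sg A : Type} (f : List Sg → A) : Set (List Sg → A) :=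
  Set.range (shiftMap f)

/-- A configuration is regular if its orbit under the shift action is finite. -/
def IsRegularConfig {Sg A : Type} (f : List Sg → A) : Prop :=
  (shiftOrbit f).Finite

/-- A tree shift: a subset of `A^{Σ*}` that is closed in the prodiscrete
topology and invariant under the shift action. -/
def IsTreeShift {Sg A : Type} [TopologicalSpace A] (X : Set (List Sg → A)) : Prop :=
  IsClosed X ∧ ∀ f ∈ X, ∀ w : List Sg, shiftMap f w ∈ X

/-- A block of size `n + 1`: a map `Δ_{n+1} → A`, where `Δ_k` is the set of
words of length `< k` (so blocks have size `≥ 1`). -/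
def TreeBlock (Sg A : Type) : Type :=
  (n : ℕ) × ({w : List Sg // w.length < n + 1} → A)

/-- The restriction of `f^w` to `Δ_{n+1}`, viewed as a block. -/
def blockAt {Sg A : Type} (f : List Sg → A) (w : List Sg) (n : ℕ) : TreeBlock Sg A :=
  ⟨n, fun m => f (w ++ m.val)⟩

/-- `X(F)`: the set of configurations avoiding every block in `F`. -/
def avoids {Sg A : Type} (F : Set (TreeBlock Sg A)) : Set (List Sg → A) :=
  {f | ∀ (w : List Sg) (n : ℕ), blockAt f w n ∉ F}

/-- A tree shift of finite type: `X = X(F)` for some finite set `F` of blocks. -/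
def IsSFT {Sg A : Type} (X : Set (List Sg → A)) : Prop :=
  ∃ F : Set (TreeBlock Sg A), F.Finite ∧ X = avoids F

/-- A cellular automaton `τ : X → B^{Σ*}`: there are a finite memory set
`M ⊆ Σ*` and a local map `μ : A^M → B` with `τ(f)(w) = μ((f^w)|_M)`. -/
def IsCellularAutomaton {Sg A B : Type} (X : Set (List Sg → A))
    (τ : X → List Sg → B) : Prop :=
  ∃ (M : Finset (List Sg)) (μ : ({m : List Sg // m ∈ M} → A) → B),
    ∀ (f : X) (w : List Sg), τ f w = μ (fun m => f.val (w ++ m.val))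

/-- A sofic tree shift: the image of a tree shift of finite type under a
cellular automaton. -/
def IsSofic {Sg A : Type} (X : Set (List Sg → A)) : Prop :=
  ∃ (C : Type) (_ : Finite C) (Y : Set (List Sg → C)) (τ : Y → List Sg → A),
    IsSFT Y ∧ IsCellularAutomaton Y τ ∧ X = Set.range τ

/-- An unrestricted Rabin automaton: a nonempty finite state set `S` and a set
of transition bundles `𝒯 ⊆ S × A × S^Σ`. -/
structure URA (Sg A : Type) where
  S : Type
  [finS : Finite S]
  [neS : Nonempty S]
  T : Set (S × A × (Sg → S))

attribute [instance] URA.finS URA.neS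

/-- Acceptance of a configuration by an unrestricted Rabin automaton. -/
def URA.Accepts {Sg A : Type} (𝒜 : URA Sg A) (f : List Sg → A) : Prop :=
  ∃ α : List Sg → 𝒜.S,
    ∀ w : List Sg, (α w, f w, fun σ => α (w ++ [σ])) ∈ 𝒜.T

/-- `Sh_𝒜`: the set of configurations accepted by `𝒜`. -/
def URA.shift {Sg A : Type} (𝒜 : URA Sg A) : Set (List Sg → A) :=
  {f | 𝒜.Accepts f}

/-- `𝒜` is essential if every state is the source of some transition bundle. -/
def URA.Essential {Sg A : Type} (𝒜 : URA Sg A) : Prop :=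
  ∀ s : 𝒜.S, ∃ t ∈ 𝒜.T, t.1 = s

/-- `𝒜` is co-deterministic if for every terminal sequence and label there is
at most one transition bundle with that terminal sequence and label. -/
def URA.CoDeterministic {Sg A : Type} (𝒜 : URA Sg A) : Prop :=
  ∀ t ∈ 𝒜.T, ∀ t' ∈ 𝒜.T, t.2.1 = t'.2.1 → t.2.2 = t'.2.2 → t = t'

/-- `𝒜` is co-complete if for every terminal sequence and label there is at
least one transition bundle with that terminal sequence and label. -/
def URA.CoComplete {Sg A : Type} (𝒜 : URA Sg A) : Prop :=
  ∀ (s : Sg → 𝒜.S) (a : A), ∃ t ∈ 𝒜.T, t.2.1 = a ∧ t.2.2 = s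

/-- One step along a bundle path: some transition bundle has source `s` and
`σ`-terminal state `s'` for some `σ`. -/
def URA.Step {Sg A : Type} (𝒜 : URA Sg A) (s s' : 𝒜.S) : Prop :=
  ∃ t ∈ 𝒜.T, t.1 = s ∧ ∃ σ : Sg, t.2.2 σ = s'

/-- `𝒜` is strongly connected if any state can be joined to any other by a
bundle path (possibly empty). -/
def URA.StronglyConnected {Sg A : Type} (𝒜 : URA Sg A) : Prop :=
  ∀ s s' : 𝒜.S, Relation.ReflTransGen 𝒜.Step s s'

/-- A tree shift `X` is irreducible if for all blocks `p ∈ X_n`, `q ∈ X_m`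
there is `f ∈ X` with `f|_{Δ_n} = p` and, for every `w ∈ Σ^n`, some `v` with
`f|_{w v Δ_m} = w v · q`. -/
def IsIrreducibleShift {Sg A : Type} (X : Set (List Sg → A)) : Prop :=
  ∀ (n m : ℕ) (p q : List Sg → A),
    (∃ fp ∈ X, ∀ u : List Sg, u.length < n → fp u = p u) →
    (∃ fq ∈ X, ∀ u : List Sg, u.length < m → fq u = q u) →
    ∃ f ∈ X, (∀ u : List Sg, u.length < n → f u = p u) ∧
      ∀ w : List Sg, w.length = n → ∃ v : List Sg,
        ∀ u : List Sg, u.length < m → f (w ++ v ++ u) = q u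

/-- A subtree of `Σ*`: contains the root `ε` and is prefix-closed. -/
def IsSubtree {Sg : Type} (T : Set (List Sg)) : Prop :=
  ([] : List Sg) ∈ T ∧ ∀ u v : List Sg, u ++ v ∈ T → u ∈ T

/-- A full subtree: each vertex has either all of its children or none. -/
def IsFullSubtree {Sg : Type} (T : Set (List Sg)) : Prop :=
  IsSubtree T ∧ ∀ w ∈ T, (∀ σ : Sg, w ++ [σ] ∈ T) ∨ (∀ σ : Sg, w ++ [σ] ∉ T)

/-- `T⁺ = T ∪ {wσ : w ∈ T, σ ∈ Σ}`. -/
def treePlus {Sg : Type} (T : Set (List Sg)) : Set (List Sg) :=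
  T ∪ {x | ∃ w ∈ T, ∃ σ : Sg, x = w ++ [σ]}

/-- Acceptance of the full-tree-pattern `p : T → A` by the finite-tree
automaton `𝒜(I, F)` (initial states `I`, final state `F`). -/
def FTAccepts {Sg A : Type} (𝒜 : URA Sg A) (I : Set 𝒜.S) (F : 𝒜.S)
    (T : Set (List Sg)) (p : List Sg → A) : Prop :=
  ∃ α : List Sg → 𝒜.S,
    (∀ w ∈ T, (α w, p w, fun σ => α (w ++ [σ])) ∈ 𝒜.T) ∧
    α [] ∈ I ∧
    ∀ w ∈ treePlus T, w ∉ T → α w = F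

/-- A Rabin automaton: an unrestricted Rabin automaton together with a set of
initial states and a family of accepting sets. -/
structure RabinAutomaton (Sg A : Type) where
  toURA : URA Sg A
  I : Set toURA.S
  Acc : Set (Set toURA.S)

/-- Acceptance by a Rabin automaton: a homomorphism realizing `f`, starting at
an initial state, and such that along every right-infinite word, the set of
states visited infinitely often belongs to the family of accepting sets. -/
def RabinAccepts {Sg A : Type} (𝒜 : RabinAutomaton Sg A) (f : List Sg → A) : Prop :=
  ∃ α : List Sg → 𝒜.toURA.S,
    (∀ w : List Sg, (α w, f w, fun σ => α (w ++ [σ])) ∈ 𝒜.toURA.T) ∧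
    α [] ∈ 𝒜.I ∧
    ∀ ω : ℕ → Sg,
      {s : 𝒜.toURA.S | ∀ N : ℕ, ∃ n ≥ N, α ((List.range n).map ω) = s} ∈ 𝒜.Acc

/-- Auxiliary: the run obtained by iterating a choice of outgoing bundles. -/
def frun {Sg S A : Type} (φ : S → S × A × (Sg → S)) : S → List Sg → S
  | s, [] => s
  | s, σ :: w => frun φ ((φ s).2.2 σ) w

theorem frun_append {Sg S A : Type} (φ : S → S × A × (Sg → S)) :
    ∀ (w : List Sg) (s : S) (σ : Sg),
      frun φ s (w ++ [σ]) = (φ (frun φ s w)).2.2 σ := by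
  intro w
  induction w with
  | nil => intro s σ; rfl
  | cons τ w ih => intro s σ; simpa [frun] using ih _ σ

/-- Auxiliary: grafting a family of side branches onto a main branch. -/
def graft {Sg X : Type} [DecidableEq Sg] (σ0 : Sg) (x : X)
    (main : List Sg → X) (side : Sg → List Sg → X) : List Sg → X
  | [] => x
  | σ :: w => if σ = σ0 then main w else side σ w

/-- the tree shift accepted by a strongly connected unrestricted
Rabin automaton is irreducible. -/
theorem stronglyConnected_irreducible {Sg A : Type} [Finite Sg] [Nonempty Sg]
    [Finite A] (𝒜 : URA Sg A) (h : 𝒜.StronglyConnected) :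
    IsIrreducibleShift 𝒜.shift := by
  classical
  intro n m p q hp hq
  obtain ⟨fp, ⟨αp, hαp⟩, hfp⟩ := hp
  obtain ⟨fq, ⟨αq, hαq⟩, hfq⟩ := hq
  -- every state has an outgoing bundle
  have hess : ∀ s : 𝒜.S, ∃ t : 𝒜.S × A × (Sg → 𝒜.S), t ∈ 𝒜.T ∧ t.1 = s := by
    intro s
    rcases (h s (αp [])).cases_head with heq | ⟨c, hsc, _⟩
    · subst heq
      exact ⟨(αp [], fp [], fun σ => αp [σ]), hαp [], rfl⟩
    · obtain ⟨t, htT, ht1, _⟩ := hsc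
      exact ⟨t, htT, ht1⟩
  choose φ hφT hφ1 using hess
  -- the filled run from any state is valid
  have hfill : ∀ (s : 𝒜.S) (w : List Sg),
      (frun φ s w, (φ (frun φ s w)).2.1, fun σ => frun φ s (w ++ [σ])) ∈ 𝒜.T := by
    intro s w
    have : (frun φ s w, (φ (frun φ s w)).2.1, fun σ => frun φ s (w ++ [σ]))
        = φ (frun φ s w) := by
      have hfun : (fun σ => frun φ s (w ++ [σ])) = (φ (frun φ s w)).2.2 := by
        funext σ; exact frun_append φ w s σ
      rw [hfun]
      exact Prod.ext (hφ1 (frun φ s w)).symm rfl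
    rw [this]; exact hφT _
  -- from any state there is a valid run eventually reproducing fq
  have lemB : ∀ s : 𝒜.S, ∃ (v : List Sg) (fc : List Sg → A) (β : List Sg → 𝒜.S),
      β [] = s ∧ (∀ w : List Sg, (β w, fc w, fun σ => β (w ++ [σ])) ∈ 𝒜.T) ∧
      (∀ u : List Sg, fc (v ++ u) = fq u) := by
    intro s
    have hr : Relation.ReflTransGen 𝒜.Step s (αq []) := h s (αq [])
    induction hr using Relation.ReflTransGen.head_induction_on with
    | refl => exact ⟨[], fq, αq, rfl, hαq, fun u => rfl⟩
    | head hsc hrest ih =>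
      rename_i a c
      obtain ⟨v, fc, β, hβ0, hβT, hfcq⟩ := ih
      obtain ⟨t, htT, ht1, σ, htσ⟩ := hsc
      refine ⟨σ :: v,
        graft σ t.2.1 fc (fun σ' => fun w => (φ (frun φ (t.2.2 σ') w)).2.1),
        graft σ a β (fun σ' => frun φ (t.2.2 σ')), rfl, ?_, ?_⟩
      · intro w
        cases w with
        | nil =>
          have : (fun τ => graft σ a β (fun σ' => frun φ (t.2.2 σ')) ([] ++ [τ]))
              = t.2.2 := by
            funext τ
            simp only [List.nil_append, graft]
            by_cases hτ : τ = σ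
            · subst hτ; simp [hβ0, htσ]
            · simp [hτ, frun]
          rw [show graft σ a β (fun σ' => frun φ (t.2.2 σ')) [] = a from rfl,
            show graft σ t.2.1 fc (fun σ' => fun w => (φ (frun φ (t.2.2 σ') w)).2.1) []
              = t.2.1 from rfl, this, ← ht1]
          exact htT
        | cons τ u =>
          by_cases hτ : τ = σ
          · subst hτ
            have h1 : ∀ x : List Sg, graft τ a β (fun σ' => frun φ (t.2.2 σ')) (τ :: x)
                = β x := by intro x; simp [graft]
            have h2 : graft τ t.2.1 fc (fun σ' => fun w => (φ (frun φ (t.2.2 σ') w)).2.1)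
                (τ :: u) = fc u := by simp [graft]
            rw [h2]
            have h3 : (fun σ'' => graft τ a β (fun σ' => frun φ (t.2.2 σ'))
                ((τ :: u) ++ [σ''])) = fun σ'' => β (u ++ [σ'']) := by
              funext σ''; exact h1 (u ++ [σ''])
            rw [h1 u, h3]
            exact hβT u
          · have h1 : ∀ x : List Sg, graft σ a β (fun σ' => frun φ (t.2.2 σ')) (τ :: x)
                = frun φ (t.2.2 τ) x := by intro x; simp [graft, hτ]
            have h2 : graft σ t.2.1 fc (fun σ' => fun w => (φ (frun φ (t.2.2 σ') w)).2.1)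
                (τ :: u) = (φ (frun φ (t.2.2 τ) u)).2.1 := by simp [graft, hτ]
            have h3 : (fun σ'' => graft σ a β (fun σ' => frun φ (t.2.2 σ'))
                ((τ :: u) ++ [σ''])) = fun σ'' => frun φ (t.2.2 τ) (u ++ [σ'']) := by
              funext σ''; exact h1 (u ++ [σ''])
            rw [h2, h1 u, h3]
            exact hfill (t.2.2 τ) u
      · intro u
        have : ((σ :: v) ++ u) = σ :: (v ++ u) := rfl
        rw [this]
        show graft σ t.2.1 fc _ (σ :: (v ++ u)) = fq u
        simp only [graft, if_pos rfl]
        exact hfcq u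
  choose V FC B hB0 hBT hBq using lemB
  -- the assembled configuration and run
  set f : List Sg → A := fun w =>
    if w.length < n then fp w else FC (αp (w.take n)) (w.drop n) with hf
  set α : List Sg → 𝒜.S := fun w =>
    if w.length < n then αp w else B (αp (w.take n)) (w.drop n) with hα
  have hαval : ∀ w : List Sg, (α w, f w, fun σ => α (w ++ [σ])) ∈ 𝒜.T := by
    intro w
    rcases lt_trichotomy (w.length + 1) n with hlt | heq | hgt
    · have hw : w.length < n := Nat.lt_of_succ_lt hlt
      have hchild : ∀ σ : Sg, α (w ++ [σ]) = αp (w ++ [σ]) := by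
        intro σ
        have hll : (w ++ [σ]).length < n := by simpa using hlt
        simp only [hα]
        rw [if_pos hll]
      have : (fun σ => α (w ++ [σ])) = fun σ => αp (w ++ [σ]) := funext hchild
      rw [hα, hf]; simp only [hw, if_pos]
      rw [this]; exact hαp w
    · have hw : w.length < n := by omega
      have hchild : ∀ σ : Sg, α (w ++ [σ]) = αp (w ++ [σ]) := by
        intro σ
        have hl : (w ++ [σ]).length = n := by simpa using heq
        have hnl : ¬ (w ++ [σ]).length < n := by omega
        have htk : (w ++ [σ]).take n = w ++ [σ] := by
          rw [← hl]; exact List.take_length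
        have hdr : (w ++ [σ]).drop n = [] := by
          rw [← hl]; exact List.drop_length
        simp only [hα, hnl, if_neg, if_false, htk, hdr]
        exact hB0 _
      have : (fun σ => α (w ++ [σ])) = fun σ => αp (w ++ [σ]) := funext hchild
      rw [hα, hf]; simp only [hw, if_pos]
      rw [this]; exact hαp w
    · have hw : n ≤ w.length := by omega
      have hnl : ¬ w.length < n := by omega
      have hchild : ∀ σ : Sg, α (w ++ [σ])
          = B (αp (w.take n)) (w.drop n ++ [σ]) := by
        intro σ
        have hnl' : ¬ (w ++ [σ]).length < n := by simp; omega
        have htk : (w ++ [σ]).take n = w.take n :=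
          List.take_append_of_le_length hw
        have hdr : (w ++ [σ]).drop n = w.drop n ++ [σ] :=
          List.drop_append_of_le_length hw
        simp only [hα, hnl', if_neg, if_false, htk, hdr]
      have : (fun σ => α (w ++ [σ]))
          = fun σ => B (αp (w.take n)) (w.drop n ++ [σ]) := funext hchild
      rw [hα, hf]; simp only [hnl, if_neg, if_false]
      rw [this]
      exact hBT (αp (w.take n)) (w.drop n)
  refine ⟨f, ⟨α, hαval⟩, ?_, ?_⟩
  · intro u hu
    rw [hf]; simp only [hu, if_pos]; exact hfp u hu
  · intro w hw
    refine ⟨V (αp w), ?_⟩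
    intro u hu
    have hlen : ¬ (w ++ V (αp w) ++ u).length < n := by simp [hw]
    have hassoc : w ++ V (αp w) ++ u = w ++ (V (αp w) ++ u) := by
      rw [List.append_assoc]
    have hwle : n ≤ w.length := le_of_eq hw.symm
    have htk : (w ++ (V (αp w) ++ u)).take n = w := by
      rw [List.take_append_of_le_length hwle, ← hw, List.take_length]
    have hdr : (w ++ (V (αp w) ++ u)).drop n = V (αp w) ++ u := by
      rw [List.drop_append_of_le_length hwle, ← hw, List.drop_length,
        List.nil_append]
    rw [hf]
    simp only [hassoc] at hlen ⊢
    simp only [hlen, if_neg, if_false, htk, hdr]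
    rw [hBq (αp w) u]
    exact hfq u hu
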